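/- The complex cosine restricted to A is a bijective map from A onto B whose inverse is the complex arccosine: cos ∘ arccos = id on B and arccos ∘ cos = id on A; moreover both maps are continuous, so cos: A → B and arccos: B → A are homeomorphisms. -/

import Mathlib

/-- The real area hyperbolic cosine, `arcosh x = log (x + √(x² − 1))`. -/
noncomputable def arcosh (x : ℝ) : ℝ := Real.log (x + Real.sqrt (x ^ 2 - 1))

/-- `G₋ = √((r²+s²−1)² + 4s²) − (r²+s²)` for `z = r + i·s`. -/
noncomputable def Gminus (z : ℂ) : ℝ :=
  Real.sqrt ((z.re ^ 2 + z.im ^ 2 - 1) ^ 2 + 4 * z.im ^ 2) - (z.re ^ 2 + z.im ^ 2)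

/-- `G₊ = √((r²+s²−1)² + 4s²) + (r²+s²)` for `z = r + i·s`. -/
noncomputable def Gplus (z : ℂ) : ℝ :=
  Real.sqrt ((z.re ^ 2 + z.im ^ 2 - 1) ^ 2 + 4 * z.im ^ 2) + (z.re ^ 2 + z.im ^ 2)

/-- The complex arcsine: `arcsin(r+is) = ½·(sgn r · arccos G₋ + i · sgn s · arcosh G₊)`. -/
noncomputable def carcsin (z : ℂ) : ℂ :=
  (1 / 2 : ℂ) *
    (((Real.sign z.re * Real.arccos (Gminus z) : ℝ) : ℂ) +
      Complex.I * ((Real.sign z.im * arcosh (Gplus z) : ℝ) : ℂ))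

/-- The complex arccosine: `arccos z = π/2 − arcsin z`. -/
noncomputable def carccos (z : ℂ) : ℂ := ((Real.pi / 2 : ℝ) : ℂ) - carcsin z
/-- The set `B = ℂ \ {t ∈ ℝ : t < −1 or t > 1}`. -/
def setB : Set ℂ := {z : ℂ | ¬ (z.im = 0 ∧ (z.re < -1 ∨ 1 < z.re))}

/-- The set `A = {a + i·b : 0 < a < π} ∪ {0, π}`. -/
noncomputable def setA : Set ℂ :=
  {z : ℂ | 0 < z.re ∧ z.re < Real.pi} ∪ {0, ((Real.pi : ℝ) : ℂ)}

/-! ### Auxiliary lemmas -/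

lemma sqS (z : ℂ) :
    Real.sqrt ((z.re ^ 2 + z.im ^ 2 - 1) ^ 2 + 4 * z.im ^ 2) ^ 2
      = (z.re ^ 2 + z.im ^ 2 - 1) ^ 2 + 4 * z.im ^ 2 :=
  Real.sq_sqrt (by positivity)

lemma S_nonneg (z : ℂ) : 0 ≤ Real.sqrt ((z.re ^ 2 + z.im ^ 2 - 1) ^ 2 + 4 * z.im ^ 2) :=
  Real.sqrt_nonneg _

lemma Gm_le_one (z : ℂ) : Gminus z ≤ 1 := by
  have h := sqS z; have h2 := S_nonneg z
  unfold Gminus; nlinarith [sq_nonneg z.re, sq_nonneg z.im]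

lemma neg_one_le_Gm (z : ℂ) : -1 ≤ Gminus z := by
  have h := sqS z; have h2 := S_nonneg z
  unfold Gminus; nlinarith [sq_nonneg z.im, sq_nonneg (z.re ^ 2 + z.im ^ 2 - 1)]

lemma one_le_Gp (z : ℂ) : 1 ≤ Gplus z := by
  have h := sqS z; have h2 := S_nonneg z
  unfold Gplus; nlinarith [sq_nonneg z.im, sq_nonneg (z.re ^ 2 + z.im ^ 2 - 1)]

lemma prod_r (z : ℂ) :
    Real.sqrt ((1 - Gminus z) / 2) * Real.sqrt ((Gplus z + 1) / 2) = |z.re| := by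
  rw [← Real.sqrt_mul (by nlinarith [Gm_le_one z])]
  have h := sqS z
  have heq : (1 - Gminus z) / 2 * ((Gplus z + 1) / 2) = z.re ^ 2 := by
    unfold Gminus Gplus; nlinarith
  rw [heq, Real.sqrt_sq_eq_abs]

lemma prod_s (z : ℂ) :
    Real.sqrt ((1 + Gminus z) / 2) * Real.sqrt ((Gplus z - 1) / 2) = |z.im| := by
  rw [← Real.sqrt_mul (by nlinarith [neg_one_le_Gm z])]
  have h := sqS z
  have heq : (1 + Gminus z) / 2 * ((Gplus z - 1) / 2) = z.im ^ 2 := by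
    unfold Gminus Gplus; nlinarith
  rw [heq, Real.sqrt_sq_eq_abs]

lemma Gm_eq_one_of_re_zero {z : ℂ} (h : z.re = 0) : Gminus z = 1 := by
  unfold Gminus
  rw [h]
  have heq : ((0:ℝ) ^ 2 + z.im ^ 2 - 1) ^ 2 + 4 * z.im ^ 2 = (z.im ^ 2 + 1) ^ 2 := by ring
  rw [heq, Real.sqrt_sq (by positivity)]; ring

lemma setB_abs_le {z : ℂ} (hz : z ∈ setB) (h : z.im = 0) : -1 ≤ z.re ∧ z.re ≤ 1 := by
  simp only [setB, Set.mem_setOf_eq, not_and, not_or, not_lt] at hz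
  exact hz h

lemma Gp_eq_one {z : ℂ} (hz : z ∈ setB) (h : z.im = 0) : Gplus z = 1 := by
  obtain ⟨h1, h2⟩ := setB_abs_le hz h
  unfold Gplus
  rw [h]
  have heq : (z.re ^ 2 + (0:ℝ) ^ 2 - 1) ^ 2 + 4 * (0:ℝ) ^ 2 = (1 - z.re ^ 2) ^ 2 := by ring
  rw [heq, Real.sqrt_sq (by nlinarith)]; ring

lemma inner_pos {x : ℝ} (hx : 1 ≤ x) : 0 < x + Real.sqrt (x ^ 2 - 1) := by
  have := Real.sqrt_nonneg (x ^ 2 - 1); linarith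

lemma arcosh_nonneg {x : ℝ} (hx : 1 ≤ x) : 0 ≤ arcosh x := by
  apply Real.log_nonneg
  have := Real.sqrt_nonneg (x ^ 2 - 1); linarith

lemma cosh_arcosh {x : ℝ} (hx : 1 ≤ x) : Real.cosh (arcosh x) = x := by
  have h1 : (0:ℝ) < x + Real.sqrt (x ^ 2 - 1) := inner_pos hx
  have hs : Real.sqrt (x ^ 2 - 1) ^ 2 = x ^ 2 - 1 := Real.sq_sqrt (by nlinarith)
  rw [arcosh, Real.cosh_log h1]
  have hinv : (x + Real.sqrt (x ^ 2 - 1))⁻¹ = x - Real.sqrt (x ^ 2 - 1) := by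
    rw [inv_eq_iff_eq_inv]
    have hne : x - Real.sqrt (x ^ 2 - 1) ≠ 0 := by
      intro h0
      have : Real.sqrt (x ^ 2 - 1) = x := by linarith
      nlinarith
    field_simp
    nlinarith
  rw [hinv]; ring

lemma arcosh_one : arcosh 1 = 0 := by simp [arcosh]

lemma cosh_half {t : ℝ} : Real.cosh (t / 2) = Real.sqrt ((Real.cosh t + 1) / 2) := by
  have h : (Real.cosh t + 1) / 2 = Real.cosh (t / 2) ^ 2 := by
    have h1 := Real.cosh_sq (t / 2)
    have h2 : Real.cosh (2 * (t / 2)) = Real.cosh (t / 2) ^ 2 + Real.sinh (t / 2) ^ 2 :=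
      Real.cosh_two_mul _
    have h3 : 2 * (t / 2) = t := by ring
    rw [h3] at h2
    nlinarith
  rw [h, Real.sqrt_sq (Real.cosh_pos _).le]

lemma sinh_half {t : ℝ} (ht : 0 ≤ t) :
    Real.sinh (t / 2) = Real.sqrt ((Real.cosh t - 1) / 2) := by
  have h : (Real.cosh t - 1) / 2 = Real.sinh (t / 2) ^ 2 := by
    have h1 := Real.cosh_sq (t / 2)
    have h2 : Real.cosh (2 * (t / 2)) = Real.cosh (t / 2) ^ 2 + Real.sinh (t / 2) ^ 2 :=
      Real.cosh_two_mul _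
    have h3 : 2 * (t / 2) = t := by ring
    rw [h3] at h2
    nlinarith
  rw [h, Real.sqrt_sq (Real.sinh_nonneg_iff.2 (by linarith))]

lemma sin_u (z : ℂ) :
    Real.sin (Real.sign z.re * Real.arccos (Gminus z) / 2)
      = Real.sign z.re * Real.sqrt ((1 - Gminus z) / 2) := by
  have h1 := Real.arccos_nonneg (Gminus z)
  have h2 := Real.arccos_le_pi (Gminus z)
  have hpi := Real.pi_pos
  have key : Real.sin (Real.arccos (Gminus z) / 2) = Real.sqrt ((1 - Gminus z) / 2) := by
    rw [Real.sin_half_eq_sqrt h1 (by linarith), Real.cos_arccos (neg_one_le_Gm z) (Gm_le_one z)]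
  rcases lt_trichotomy z.re 0 with h | h | h
  · rw [Real.sign_of_neg h,
      show (-1 : ℝ) * Real.arccos (Gminus z) / 2 = -(Real.arccos (Gminus z) / 2) by ring,
      Real.sin_neg, key]; ring
  · rw [h, Real.sign_zero]; simp
  · rw [Real.sign_of_pos h, one_mul, key, one_mul]

lemma cos_u (z : ℂ) :
    Real.cos (Real.sign z.re * Real.arccos (Gminus z) / 2)
      = Real.sqrt ((1 + Gminus z) / 2) := by
  have h1 := Real.arccos_nonneg (Gminus z)
  have h2 := Real.arccos_le_pi (Gminus z)
  have hpi := Real.pi_pos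
  have key : Real.cos (Real.arccos (Gminus z) / 2) = Real.sqrt ((1 + Gminus z) / 2) := by
    rw [Real.cos_half (by linarith) h2, Real.cos_arccos (neg_one_le_Gm z) (Gm_le_one z)]
  rcases lt_trichotomy z.re 0 with h | h | h
  · rw [Real.sign_of_neg h,
      show (-1 : ℝ) * Real.arccos (Gminus z) / 2 = -(Real.arccos (Gminus z) / 2) by ring,
      Real.cos_neg, key]
  · rw [h, Real.sign_zero, zero_mul, zero_div, Real.cos_zero, Gm_eq_one_of_re_zero h]
    norm_num
  · rw [Real.sign_of_pos h, one_mul, key]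

lemma cosh_v (z : ℂ) (hz : z.im ≠ 0 ∨ Gplus z = 1) :
    Real.cosh (Real.sign z.im * arcosh (Gplus z) / 2)
      = Real.sqrt ((Gplus z + 1) / 2) := by
  have key : Real.cosh (arcosh (Gplus z) / 2) = Real.sqrt ((Gplus z + 1) / 2) := by
    rw [cosh_half, cosh_arcosh (one_le_Gp z)]
  rcases lt_trichotomy z.im 0 with h | h | h
  · rw [Real.sign_of_neg h,
      show (-1 : ℝ) * arcosh (Gplus z) / 2 = -(arcosh (Gplus z) / 2) by ring,
      Real.cosh_neg, key]
  · rcases hz with h' | h'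
    · exact absurd h h'
    · rw [h, Real.sign_zero, zero_mul, zero_div, Real.cosh_zero, h']
      norm_num
  · rw [Real.sign_of_pos h, one_mul, key]

lemma sinh_v (z : ℂ) :
    Real.sinh (Real.sign z.im * arcosh (Gplus z) / 2)
      = Real.sign z.im * Real.sqrt ((Gplus z - 1) / 2) := by
  have key : Real.sinh (arcosh (Gplus z) / 2) = Real.sqrt ((Gplus z - 1) / 2) := by
    rw [sinh_half (arcosh_nonneg (one_le_Gp z)), cosh_arcosh (one_le_Gp z)]
  rcases lt_trichotomy z.im 0 with h | h | h
  · rw [Real.sign_of_neg h,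
      show (-1 : ℝ) * arcosh (Gplus z) / 2 = -(arcosh (Gplus z) / 2) by ring,
      Real.sinh_neg, key]; ring
  · rw [h, Real.sign_zero]; simp
  · rw [Real.sign_of_pos h, one_mul, key, one_mul]

lemma sign_mul_abs' (x : ℝ) : Real.sign x * |x| = x := by
  rcases lt_trichotomy x 0 with h | h | h
  · rw [Real.sign_of_neg h, abs_of_neg h]; ring
  · simp [h]
  · rw [Real.sign_of_pos h, abs_of_pos h]; ring

lemma carcsin_re (z : ℂ) :
    (carcsin z).re = Real.sign z.re * Real.arccos (Gminus z) / 2 := by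
  simp [carcsin]; ring

lemma carcsin_im (z : ℂ) :
    (carcsin z).im = Real.sign z.im * arcosh (Gplus z) / 2 := by
  simp [carcsin]; ring

lemma sin_carcsin {z : ℂ} (hz : z ∈ setB) : Complex.sin (carcsin z) = z := by
  have hgp1 : z.im ≠ 0 ∨ Gplus z = 1 := by
    by_cases h : z.im = 0
    · exact Or.inr (Gp_eq_one hz h)
    · exact Or.inl h
  set u := Real.sign z.re * Real.arccos (Gminus z) / 2 with hu
  set v := Real.sign z.im * arcosh (Gplus z) / 2 with hv
  have hw : carcsin z = (u : ℂ) + (v : ℂ) * Complex.I := by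
    apply Complex.ext <;> simp [carcsin_re, carcsin_im, hu, hv]
  rw [hw, Complex.sin_add_mul_I, ← Complex.ofReal_sin, ← Complex.ofReal_cosh,
    ← Complex.ofReal_cos, ← Complex.ofReal_sinh]
  apply Complex.ext <;>
    simp only [Complex.add_re, Complex.add_im, Complex.mul_re, Complex.mul_im,
      Complex.I_re, Complex.I_im, Complex.ofReal_re, Complex.ofReal_im,
      mul_zero, mul_one, zero_mul, one_mul, sub_zero, zero_sub, add_zero, zero_add,
      neg_zero, neg_neg]
  · rw [sin_u, cosh_v z hgp1, mul_assoc, prod_r, sign_mul_abs']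
  · rw [cos_u, sinh_v,
      show Real.sqrt ((1 + Gminus z) / 2) * (Real.sign z.im * Real.sqrt ((Gplus z - 1) / 2))
        = Real.sign z.im * (Real.sqrt ((1 + Gminus z) / 2) * Real.sqrt ((Gplus z - 1) / 2))
        by ring,
      prod_s, sign_mul_abs']

lemma cos_carccos {z : ℂ} (hz : z ∈ setB) : Complex.cos (carccos z) = z := by
  rw [carccos, show ((Real.pi / 2 : ℝ) : ℂ) = (Real.pi : ℂ) / 2 by push_cast; ring,
    Complex.cos_pi_div_two_sub, sin_carcsin hz]

lemma reA {z : ℂ} (hz : z ∈ setA) : 0 ≤ z.re ∧ z.re ≤ Real.pi := by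
  rcases hz with h | h
  · exact ⟨h.1.le, h.2.le⟩
  · rcases h with h | h <;> subst h <;> simp [Real.pi_pos.le]

lemma eqA0 {z : ℂ} (hz : z ∈ setA) (h : z.re = 0) : z = 0 := by
  rcases hz with h' | h' | h'
  · exact absurd h h'.1.ne'
  · exact h'
  · rw [h'] at h; simp at h

lemma eqApi {z : ℂ} (hz : z ∈ setA) (h : z.re = Real.pi) : z = ((Real.pi : ℝ) : ℂ) := by
  rcases hz with h' | h' | h'
  · exact absurd h h'.2.ne
  · rw [h'] at h; simp at h; exact absurd h.symm Real.pi_ne_zero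
  · exact h'

lemma mapsTo_cos : Set.MapsTo Complex.cos setA setB := by
  intro z hz
  simp only [setB, Set.mem_setOf_eq]
  rintro ⟨him, hre⟩
  have hcosre : (Complex.cos z).re = Real.cos z.re * Real.cosh z.im := by
    rw [Complex.cos_eq]
    simp [← Complex.ofReal_cos, ← Complex.ofReal_cosh, ← Complex.ofReal_sin,
      ← Complex.ofReal_sinh]
  have hcosim : (Complex.cos z).im = -(Real.sin z.re * Real.sinh z.im) := by
    rw [Complex.cos_eq]
    simp [← Complex.ofReal_cos, ← Complex.ofReal_cosh, ← Complex.ofReal_sin,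
      ← Complex.ofReal_sinh]
  rcases hz with h | h | h
  · have hs : Real.sin z.re > 0 := Real.sin_pos_of_pos_of_lt_pi h.1 h.2
    rw [hcosim] at him
    have hprod : Real.sin z.re * Real.sinh z.im = 0 := neg_eq_zero.mp him
    have hsh : Real.sinh z.im = 0 := by
      rcases mul_eq_zero.mp hprod with h' | h'
      · exact absurd h' hs.ne'
      · exact h'
    have hb : z.im = 0 := by
      have := Real.sinh_injective (a₁ := z.im) (a₂ := 0)
      rw [Real.sinh_zero] at this
      exact this hsh
    rw [hcosre, hb, Real.cosh_zero, mul_one] at hre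
    rcases hre with h' | h'
    · linarith [Real.neg_one_le_cos z.re]
    · linarith [Real.cos_le_one z.re]
  · rw [h] at hre
    rw [Complex.cos_zero] at hre
    norm_num at hre
  · rw [h] at hre
    rw [show Complex.cos ((Real.pi : ℝ) : ℂ) = -1 by
      rw [← Complex.ofReal_cos]; simp] at hre
    rcases hre with h' | h' <;> norm_num at h'

lemma injOn_cos : Set.InjOn Complex.cos setA := by
  intro x hx y hy h
  have hxr := reA hx
  have hyr := reA hy
  have hpi := Real.pi_pos
  rw [Complex.cos_eq_cos_iff] at h
  obtain ⟨k, hk | hk⟩ := h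
  · have hre : y.re = 2 * (k : ℝ) * Real.pi + x.re := by
      have := congrArg Complex.re hk
      simpa using this
    have hk0 : k = 0 := by
      have h1 : (-1 : ℝ) < (k : ℝ) := by nlinarith
      have h2 : (k : ℝ) < 1 := by nlinarith
      have h1' : (-1 : ℤ) < k := by exact_mod_cast h1
      have h2' : k < 1 := by exact_mod_cast h2
      omega
    rw [hk0] at hk; push_cast at hk; rw [hk]; ring
  · have hre : y.re = 2 * (k : ℝ) * Real.pi - x.re := by
      have := congrArg Complex.re hk
      simpa using this
    have hk01 : k = 0 ∨ k = 1 := by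
      have h1 : (-1 : ℝ) < (k : ℝ) := by nlinarith
      have h2 : (k : ℝ) < 2 := by nlinarith
      have h1' : (-1 : ℤ) < k := by exact_mod_cast h1
      have h2' : k < 2 := by exact_mod_cast h2
      omega
    rcases hk01 with h0 | h1
    · rw [h0] at hk hre; push_cast at hk hre
      have hx0 : x.re = 0 := by linarith
      have hy0 : y.re = 0 := by linarith
      rw [eqA0 hx hx0, eqA0 hy hy0]
    · rw [h1] at hk hre; push_cast at hk hre
      have hxpi : x.re = Real.pi := by linarith
      have hypi : y.re = Real.pi := by linarith
      rw [eqApi hx hxpi, eqApi hy hypi]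

lemma Gm_one : Gminus 1 = -1 := by
  unfold Gminus; norm_num

lemma Gp_one : Gplus 1 = 1 := by
  unfold Gplus; norm_num

lemma Gm_negone : Gminus (-1) = -1 := by
  unfold Gminus; norm_num

lemma Gp_negone : Gplus (-1) = 1 := by
  unfold Gplus; norm_num

lemma arcosh_one' : arcosh 1 = 0 := by simp [arcosh]

lemma carccos_one : carccos 1 = 0 := by
  rw [carccos, carcsin]
  rw [show ((1:ℂ)).re = 1 by simp, show ((1:ℂ)).im = 0 by simp]
  rw [Gm_one, Gp_one, Real.arccos_neg_one, Real.sign_one, Real.sign_zero, arcosh_one']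
  push_cast
  ring

lemma carccos_neg_one : carccos (-1) = ((Real.pi : ℝ) : ℂ) := by
  rw [carccos, carcsin]
  rw [show ((-1:ℂ)).re = -1 by simp, show ((-1:ℂ)).im = 0 by simp]
  rw [Gm_negone, Gp_negone, Real.arccos_neg_one, Real.sign_of_neg (by norm_num : (-1:ℝ) < 0),
    Real.sign_zero, arcosh_one']
  push_cast
  ring

lemma setB_abs_le' {z : ℂ} (hz : z ∈ setB) (h : z.im = 0) : -1 ≤ z.re ∧ z.re ≤ 1 := by
  simp only [setB, Set.mem_setOf_eq, not_and, not_or, not_lt] at hz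
  exact hz h

lemma carccos_re (z : ℂ) :
    (carccos z).re = Real.pi / 2 - Real.sign z.re * Real.arccos (Gminus z) / 2 := by
  simp [carccos, carcsin]; ring

lemma eq_one_of {z : ℂ} (hz : z ∈ setB) (hr : 0 < z.re)
    (hα : Real.arccos (Gminus z) = Real.pi) : z = 1 := by
  have hGm : Gminus z ≤ -1 := Real.arccos_eq_pi.mp hα
  have hS2 := Real.sq_sqrt (by positivity :
    (0:ℝ) ≤ (z.re ^ 2 + z.im ^ 2 - 1) ^ 2 + 4 * z.im ^ 2)
  have hS0 := Real.sqrt_nonneg ((z.re ^ 2 + z.im ^ 2 - 1) ^ 2 + 4 * z.im ^ 2)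
  rw [Gminus] at hGm
  have him : z.im = 0 := by nlinarith [sq_nonneg z.im, sq_nonneg (z.re ^ 2 + z.im ^ 2 - 1)]
  have hle := (setB_abs_le' hz him).2
  have hge : 1 ≤ z.re := by nlinarith [sq_nonneg (z.re - 1)]
  have : z.re = 1 := le_antisymm hle hge
  exact Complex.ext (by simpa using this) (by simpa using him)

lemma eq_neg_one_of {z : ℂ} (hz : z ∈ setB) (hr : z.re < 0)
    (hα : Real.arccos (Gminus z) = Real.pi) : z = -1 := by
  have hGm : Gminus z ≤ -1 := Real.arccos_eq_pi.mp hα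
  have hS2 := Real.sq_sqrt (by positivity :
    (0:ℝ) ≤ (z.re ^ 2 + z.im ^ 2 - 1) ^ 2 + 4 * z.im ^ 2)
  have hS0 := Real.sqrt_nonneg ((z.re ^ 2 + z.im ^ 2 - 1) ^ 2 + 4 * z.im ^ 2)
  rw [Gminus] at hGm
  have him : z.im = 0 := by nlinarith [sq_nonneg z.im, sq_nonneg (z.re ^ 2 + z.im ^ 2 - 1)]
  have hle := (setB_abs_le' hz him).1
  have hge : z.re ≤ -1 := by nlinarith [sq_nonneg (z.re + 1)]
  have : z.re = -1 := le_antisymm hge hle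
  exact Complex.ext (by simpa using this) (by simpa using him)

lemma mapsTo_carccos : Set.MapsTo carccos setB setA := by
  intro z hz
  have hα1 := Real.arccos_nonneg (Gminus z)
  have hα2 := Real.arccos_le_pi (Gminus z)
  have hπ := Real.pi_pos
  rcases lt_trichotomy z.re 0 with h | h | h
  · by_cases hα : Real.arccos (Gminus z) = Real.pi
    · rw [eq_neg_one_of hz h hα, carccos_neg_one]
      exact Or.inr (Or.inr rfl)
    · left
      rw [Set.mem_setOf_eq, carccos_re, Real.sign_of_neg h]
      have : Real.arccos (Gminus z) < Real.pi := lt_of_le_of_ne hα2 hα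
      constructor <;> nlinarith
  · left
    rw [Set.mem_setOf_eq, carccos_re, h, Real.sign_zero]
    constructor <;> nlinarith
  · by_cases hα : Real.arccos (Gminus z) = Real.pi
    · rw [eq_one_of hz h hα, carccos_one]
      exact Or.inr (Or.inl rfl)
    · left
      rw [Set.mem_setOf_eq, carccos_re, Real.sign_of_pos h]
      have : Real.arccos (Gminus z) < Real.pi := lt_of_le_of_ne hα2 hα
      constructor <;> nlinarith

lemma contGm : Continuous Gminus := by
  unfold Gminus
  have hc : Continuous fun z : ℂ => (z.re ^ 2 + z.im ^ 2 - 1) ^ 2 + 4 * z.im ^ 2 := by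
    fun_prop
  exact (Real.continuous_sqrt.comp hc).sub (by fun_prop)

lemma contGp : Continuous Gplus := by
  unfold Gplus
  have hc : Continuous fun z : ℂ => (z.re ^ 2 + z.im ^ 2 - 1) ^ 2 + 4 * z.im ^ 2 := by
    fun_prop
  exact (Real.continuous_sqrt.comp hc).add (by fun_prop)

lemma abs_sign_le (x : ℝ) : |Real.sign x| ≤ 1 := by
  rcases Real.sign_apply_eq x with h | h | h <;> rw [h] <;> norm_num

lemma contAt_arcosh {x : ℝ} (hx : 1 ≤ x) : ContinuousAt arcosh x := by
  have hin : Continuous fun y : ℝ => y + Real.sqrt (y ^ 2 - 1) := by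
    exact continuous_id.add (Real.continuous_sqrt.comp (by fun_prop))
  have hpos : 0 < x + Real.sqrt (x ^ 2 - 1) := by
    have := Real.sqrt_nonneg (x ^ 2 - 1); linarith
  have := ContinuousAt.comp (g := Real.log) (f := fun y : ℝ => y + Real.sqrt (y ^ 2 - 1))
    (x := x) (Real.continuousAt_log hpos.ne') hin.continuousAt
  exact this

lemma contAt_arcoshGp (z : ℂ) : ContinuousAt (fun w : ℂ => arcosh (Gplus w)) z :=
  (contAt_arcosh (one_le_Gp z)).comp contGp.continuousAt

lemma contAt_f (z : ℂ) :
    ContinuousAt (fun w : ℂ => Real.sign w.re * Real.arccos (Gminus w)) z := by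
  have hA : Continuous fun w : ℂ => Real.arccos (Gminus w) :=
    Real.continuous_arccos.comp contGm
  rcases lt_trichotomy z.re 0 with h | h | h
  · have hmem : {w : ℂ | w.re < 0} ∈ nhds z :=
      (isOpen_lt Complex.continuous_re continuous_const).mem_nhds h
    apply ContinuousAt.congr ((continuous_const.mul hA).continuousAt
      (x := z) (f := fun w : ℂ => (-1 : ℝ) * Real.arccos (Gminus w)))
    filter_upwards [hmem] with w hw
    rw [Real.sign_of_neg hw]
  · have hF0 : Real.sign z.re * Real.arccos (Gminus z) = 0 := by
      rw [h, Real.sign_zero, zero_mul]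
    unfold ContinuousAt
    beta_reduce
    rw [hF0]
    apply squeeze_zero_norm (a := fun w : ℂ => |Real.arccos (Gminus w)|)
    · intro w
      rw [Real.norm_eq_abs, abs_mul]
      calc |Real.sign w.re| * |Real.arccos (Gminus w)|
          ≤ 1 * |Real.arccos (Gminus w)| := by
            apply mul_le_mul_of_nonneg_right (abs_sign_le _) (abs_nonneg _)
        _ = |Real.arccos (Gminus w)| := one_mul _
    · have := (hA.abs.tendsto z)
      rw [Gm_eq_one_of_re_zero h, Real.arccos_one, abs_zero] at this
      exact this
  · have hmem : {w : ℂ | 0 < w.re} ∈ nhds z :=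
      (isOpen_lt continuous_const Complex.continuous_re).mem_nhds h
    apply ContinuousAt.congr ((continuous_const.mul hA).continuousAt
      (x := z) (f := fun w : ℂ => (1 : ℝ) * Real.arccos (Gminus w)))
    filter_upwards [hmem] with w hw
    rw [Real.sign_of_pos hw]

lemma contAt_g {z : ℂ} (hz : z ∈ setB) :
    ContinuousAt (fun w : ℂ => Real.sign w.im * arcosh (Gplus w)) z := by
  rcases lt_trichotomy z.im 0 with h | h | h
  · have hmem : {w : ℂ | w.im < 0} ∈ nhds z :=
      (isOpen_lt Complex.continuous_im continuous_const).mem_nhds h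
    have hc : ContinuousAt (fun w : ℂ => (-1 : ℝ) * arcosh (Gplus w)) z :=
      continuousAt_const.mul (contAt_arcoshGp z)
    apply hc.congr
    filter_upwards [hmem] with w hw
    rw [Real.sign_of_neg hw]
  · have hF0 : Real.sign z.im * arcosh (Gplus z) = 0 := by
      rw [h, Real.sign_zero, zero_mul]
    unfold ContinuousAt
    beta_reduce
    rw [hF0]
    apply squeeze_zero_norm (a := fun w : ℂ => |arcosh (Gplus w)|)
    · intro w
      rw [Real.norm_eq_abs, abs_mul]
      calc |Real.sign w.im| * |arcosh (Gplus w)|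
          ≤ 1 * |arcosh (Gplus w)| := by
            apply mul_le_mul_of_nonneg_right (abs_sign_le _) (abs_nonneg _)
        _ = |arcosh (Gplus w)| := one_mul _
    · have h2 := ((contAt_arcoshGp z).abs).tendsto
      rw [show arcosh (Gplus z) = 0 by rw [Gp_eq_one hz h]; simp [arcosh], abs_zero] at h2
      exact h2
  · have hmem : {w : ℂ | 0 < w.im} ∈ nhds z :=
      (isOpen_lt continuous_const Complex.continuous_im).mem_nhds h
    have hc : ContinuousAt (fun w : ℂ => (1 : ℝ) * arcosh (Gplus w)) z :=
      continuousAt_const.mul (contAt_arcoshGp z)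
    apply hc.congr
    filter_upwards [hmem] with w hw
    rw [Real.sign_of_pos hw]

lemma contOn_carccos : ContinuousOn carccos setB := by
  intro z hz
  apply ContinuousAt.continuousWithinAt
  have h1 : ContinuousAt
      (fun w : ℂ => ((Real.sign w.re * Real.arccos (Gminus w) : ℝ) : ℂ)) z :=
    Complex.continuous_ofReal.continuousAt.comp (contAt_f z)
  have h2 : ContinuousAt
      (fun w : ℂ => ((Real.sign w.im * arcosh (Gplus w) : ℝ) : ℂ)) z :=
    Complex.continuous_ofReal.continuousAt.comp (contAt_g hz)
  have : ContinuousAt (fun w : ℂ => ((Real.pi / 2 : ℝ) : ℂ) -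
      (1 / 2 : ℂ) * (((Real.sign w.re * Real.arccos (Gminus w) : ℝ) : ℂ) +
        Complex.I * ((Real.sign w.im * arcosh (Gplus w) : ℝ) : ℂ))) z :=
    continuousAt_const.sub (continuousAt_const.mul (h1.add (continuousAt_const.mul h2)))
  exact this

/-- `cos : A → B` and `arccos : B → A` are mutually inverse continuous bijections,
hence homeomorphisms. -/
theorem stmt3 :
    Set.BijOn Complex.cos setA setB ∧
    Set.BijOn carccos setB setA ∧
    (∀ z ∈ setB, Complex.cos (carccos z) = z) ∧
    (∀ z ∈ setA, carccos (Complex.cos z) = z) ∧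
    ContinuousOn Complex.cos setA ∧
    ContinuousOn carccos setB := by
  have hmapsCos := mapsTo_cos
  have hinjCos := injOn_cos
  have hmapsC := mapsTo_carccos
  have hcc : ∀ z ∈ setB, Complex.cos (carccos z) = z := fun z hz => cos_carccos hz
  have hac : ∀ z ∈ setA, carccos (Complex.cos z) = z := fun z hz =>
    hinjCos (hmapsC (hmapsCos hz)) hz (cos_carccos (hmapsCos hz))
  refine ⟨⟨hmapsCos, hinjCos, ?_⟩, ⟨hmapsC, ?_, ?_⟩, hcc, hac,
    Complex.continuous_cos.continuousOn, contOn_carccos⟩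
  · intro z hz
    exact ⟨carccos z, hmapsC hz, cos_carccos hz⟩
  · intro a ha b hb h
    rw [← cos_carccos ha, ← cos_carccos hb, h]
  · intro z hz
    exact ⟨Complex.cos z, hmapsCos hz, hac z hz⟩
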